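/- Multidimensional integration by parts: let g, φ : ℝᵈ → ℝ be d-times continuously differentiable with g (or φ) vanishing at infinity together with all its derivatives sufficiently fast for the boundary terms at +∞ to vanish. Then for all y ∈ ℝᵈ: ∫_{z ≥ y} (∂ᵈ g/∂z₁⋯∂z_d)(z) φ(z) dz = (−1)ᵈ Σ_{I ⊆ {1,…,d}} ∫_{z_I ≥ y_I} g(y_{Ī}, z_I) (∂^{|I|} φ/∂z_I)(y_{Ī}, z_I) dz_I, where the sum runs over all subsets I of {1,…,d}, (y_{Ī}, z_I) denotes the vector whose I-coordinates are taken from z and remaining coordinates from y, and the I = ∅ term is g(y)φ(y). -/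

import Mathlib

open MeasureTheory Filter Topology

/-- The partial derivative in the `i`-th coordinate direction. -/
noncomputable def pd {d : ℕ} (i : Fin d) (f : (Fin d → ℝ) → ℝ) : (Fin d → ℝ) → ℝ :=
  fun x => fderiv ℝ f x (Pi.single i 1)

/-- Iterated mixed partial derivative along a list of coordinates. -/
noncomputable def mpartialList {d : ℕ} : List (Fin d) → ((Fin d → ℝ) → ℝ) → (Fin d → ℝ) → ℝ
  | [], f => f
  | i :: l, f => mpartialList l (pd i f)

/-- Mixed partial derivative `∂^{|I|}/∂z_I`, once in each coordinate of `I`. -/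
noncomputable def mpartial {d : ℕ} (I : Finset (Fin d)) (f : (Fin d → ℝ) → ℝ) :
    (Fin d → ℝ) → ℝ :=
  mpartialList I.toList f

/-- The vector `(y_{Ī}, z_I)`: coordinates in `I` taken from `z`, the rest from `y`. -/
noncomputable def combine {d : ℕ} (y : Fin d → ℝ) (I : Finset (Fin d))
    (z : {i // i ∈ I} → ℝ) : Fin d → ℝ :=
  fun i => if h : i ∈ I then z ⟨i, h⟩ else y i


section AuxIBP

variable {d : ℕ}

lemma pd_contDiff {n : ℕ} {f : (Fin d → ℝ) → ℝ} (i : Fin d)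
    (hf : ContDiff ℝ (n + 1) f) : ContDiff ℝ n (pd i f) := by
  have h : ContDiff ℝ n (fderiv ℝ f) := hf.fderiv_right (by exact_mod_cast le_refl ((n:ℕ∞)+1))
  exact h.clm_apply contDiff_const

lemma mpartialList_contDiff {n : ℕ} : ∀ (l : List (Fin d)) (f : (Fin d → ℝ) → ℝ),
    ContDiff ℝ (n + l.length) f → ContDiff ℝ n (mpartialList l f)
  | [], f, hf => by simpa [mpartialList] using hf
  | i :: l, f, hf => by
    refine mpartialList_contDiff l (pd i f) (pd_contDiff i ?_)
    have : ((n : WithTop ℕ∞) + (i :: l).length) = ((n + l.length : ℕ) : WithTop ℕ∞) + 1 := by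
      push_cast [List.length_cons]; ring
    rwa [this] at hf

lemma pd_continuous {f : (Fin d → ℝ) → ℝ} (i : Fin d) (hf : ContDiff ℝ 1 f) :
    Continuous (pd i f) := by
  have := pd_contDiff (n := 0) i (by exact_mod_cast hf)
  exact this.continuous

lemma mpartialList_continuous {l : List (Fin d)} {f : (Fin d → ℝ) → ℝ}
    (hf : ContDiff ℝ l.length f) : Continuous (mpartialList l f) := by
  have := mpartialList_contDiff (n := 0) l f (by simpa using hf)
  exact this.continuous

lemma pd_hcs {f : (Fin d → ℝ) → ℝ} (i : Fin d) (hf : HasCompactSupport f) :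
    HasCompactSupport (pd i f) := hf.fderiv_apply ℝ _

lemma mpartialList_hcs : ∀ (l : List (Fin d)) {f : (Fin d → ℝ) → ℝ},
    HasCompactSupport f → HasCompactSupport (mpartialList l f)
  | [], f, hf => hf
  | i :: l, f, hf => mpartialList_hcs l (pd_hcs i hf)

lemma pd_comm {f : (Fin d → ℝ) → ℝ} (a b : Fin d) (hf : ContDiff ℝ 2 f) :
    pd a (pd b f) = pd b (pd a f) := by
  funext x
  have hd1 : ∀ y, HasFDerivAt f (fderiv ℝ f y) y := fun y =>
    (hf.differentiable (by norm_num) y).hasFDerivAt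
  have hd2 : DifferentiableAt ℝ (fderiv ℝ f) x := by
    have : ContDiff ℝ 1 (fderiv ℝ f) := hf.fderiv_right (by norm_num)
    exact (this.differentiable one_ne_zero) x
  have hsymm := second_derivative_symmetric hd1 hd2.hasFDerivAt
  have key : ∀ v w : Fin d → ℝ,
      fderiv ℝ (fun y => fderiv ℝ f y v) x w = fderiv ℝ (fderiv ℝ f) x w v := by
    intro v w
    have : HasFDerivAt (fun y => fderiv ℝ f y v)
        ((ContinuousLinearMap.apply ℝ ℝ v).comp (fderiv ℝ (fderiv ℝ f) x)) x :=
      (ContinuousLinearMap.apply ℝ ℝ v).hasFDerivAt.comp x hd2.hasFDerivAt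
    rw [this.fderiv]; rfl
  show fderiv ℝ (fun y => fderiv ℝ f y (Pi.single b 1)) x (Pi.single a 1)
      = fderiv ℝ (fun y => fderiv ℝ f y (Pi.single a 1)) x (Pi.single b 1)
  rw [key, key, hsymm]

lemma mpartialList_perm : ∀ {l l' : List (Fin d)}, l.Perm l' →
    ∀ (f : (Fin d → ℝ) → ℝ), ContDiff ℝ l.length f → mpartialList l f = mpartialList l' f := by
  intro l l' h
  induction h with
  | nil => intro f _; rfl
  | @cons x l₁ l₂ h ih =>
      intro f hf
      show mpartialList l₁ (pd x f) = mpartialList l₂ (pd x f)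
      refine ih (pd x f) (pd_contDiff x ?_)
      have : (((x :: l₁).length : ℕ) : WithTop ℕ∞) = ((l₁.length : ℕ) : WithTop ℕ∞) + 1 := by
        push_cast [List.length_cons]; ring
      rwa [this] at hf
  | swap x y l =>
      intro f hf
      show mpartialList l (pd x (pd y f)) = mpartialList l (pd y (pd x f))
      have h2 : (2 : WithTop ℕ∞) ≤ (((y :: x :: l).length : ℕ) : WithTop ℕ∞) := by
        exact_mod_cast (by simp : 2 ≤ (y :: x :: l).length)
      rw [pd_comm x y (hf.of_le h2)]
  | trans h₁ h₂ ih₁ ih₂ =>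
      intro f hf
      rw [ih₁ f hf, ih₂ f (by rwa [← h₁.length_eq])]

lemma mpartialList_concat : ∀ (l : List (Fin d)) (j : Fin d) (f : (Fin d → ℝ) → ℝ),
    mpartialList (l ++ [j]) f = pd j (mpartialList l f)
  | [], j, f => rfl
  | i :: l, j, f => mpartialList_concat l j (pd i f)

lemma mpartial_insert {I : Finset (Fin d)} {j : Fin d} (hj : j ∉ I)
    {f : (Fin d → ℝ) → ℝ} (hf : ContDiff ℝ (I.card + 1) f) :
    mpartial (insert j I) f = mpartial I (pd j f) := by
  unfold mpartial
  have hlen : (insert j I).toList.length = I.card + 1 := by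
    simp [Finset.length_toList, Finset.card_insert_of_notMem hj]
  rw [mpartialList_perm (Finset.toList_insert hj) f (by rw [hlen]; exact_mod_cast hf)]
  rfl

lemma mpartial_insert' {I : Finset (Fin d)} {j : Fin d} (hj : j ∉ I)
    {f : (Fin d → ℝ) → ℝ} (hf : ContDiff ℝ (I.card + 1) f) :
    mpartial (insert j I) f = pd j (mpartial I f) := by
  unfold mpartial
  rw [← mpartialList_concat]
  have hperm : (insert j I).toList.Perm (I.toList ++ [j]) :=
    (Finset.toList_insert hj).trans (List.perm_append_singleton j I.toList).symm
  have hlen : (insert j I).toList.length = I.card + 1 := by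
    simp [Finset.length_toList, Finset.card_insert_of_notMem hj]
  rw [mpartialList_perm hperm f (by rw [hlen]; exact_mod_cast hf)]

lemma mpartial_contDiff {n : ℕ} {I : Finset (Fin d)} {f : (Fin d → ℝ) → ℝ}
    (hf : ContDiff ℝ (n + I.card) f) : ContDiff ℝ n (mpartial I f) :=
  mpartialList_contDiff I.toList f (by rwa [Finset.length_toList])

lemma mpartial_continuous {I : Finset (Fin d)} {f : (Fin d → ℝ) → ℝ}
    (hf : ContDiff ℝ I.card f) : Continuous (mpartial I f) :=
  mpartialList_continuous (by rwa [Finset.length_toList])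

lemma mpartial_hcs {I : Finset (Fin d)} {f : (Fin d → ℝ) → ℝ} (hf : HasCompactSupport f) :
    HasCompactSupport (mpartial I f) := mpartialList_hcs I.toList hf

lemma mpartial_empty (f : (Fin d → ℝ) → ℝ) : mpartial (∅ : Finset (Fin d)) f = f := by
  simp [mpartial, Finset.toList_empty, mpartialList]

lemma continuous_combine (y : Fin d → ℝ) (I : Finset (Fin d)) :
    Continuous (combine y I) := by
  refine continuous_pi fun i => ?_
  by_cases h : i ∈ I
  · simpa [combine, h] using continuous_apply (⟨i, h⟩ : {i // i ∈ I})
  · simpa [combine, h] using continuous_const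

lemma combine_restrict (y : Fin d → ℝ) (I : Finset (Fin d)) (z : {i // i ∈ I} → ℝ)
    (i : {i // i ∈ I}) : combine y I z i.1 = z i := by
  simp [combine, i.2]

lemma combine_not_mem (y : Fin d → ℝ) (I : Finset (Fin d)) (z : {i // i ∈ I} → ℝ)
    {i : Fin d} (hi : i ∉ I) : combine y I z i = y i := by
  simp [combine, hi]

/-- compact support is preserved by composing with `combine`. -/
lemma hcs_comp_combine {F : (Fin d → ℝ) → ℝ} (hF : HasCompactSupport F)
    (y : Fin d → ℝ) (I : Finset (Fin d)) :
    HasCompactSupport (fun z => F (combine y I z)) := by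
  set r : (Fin d → ℝ) → ({i // i ∈ I} → ℝ) := fun x i => x i.1 with hr
  have hrc : Continuous r := continuous_pi fun i => continuous_apply _
  have hsub : tsupport (fun z => F (combine y I z)) ⊆ r '' tsupport F := by
    have h1 : Function.support (fun z => F (combine y I z)) ⊆
        combine y I ⁻¹' tsupport F := fun z hz =>
      subset_tsupport F (by simpa [Function.mem_support] using hz)
    have h2 : combine y I ⁻¹' tsupport F ⊆ r '' tsupport F := by
      intro z hz
      refine ⟨combine y I z, hz, ?_⟩
      funext i; simp [hr, combine_restrict]
    refine (closure_minimal h1 ?_).trans h2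
    exact (isClosed_tsupport F).preimage (continuous_combine y I)
  exact IsCompact.of_isClosed_subset (hF.image hrc) (isClosed_tsupport _) hsub

lemma continuous_update_line (x : Fin d → ℝ) (j : Fin d) :
    Continuous (fun t : ℝ => Function.update x j t) := by
  refine continuous_pi fun i => ?_
  rcases eq_or_ne i j with rfl | h
  · simpa [Function.update_self] using continuous_id'
  · simpa [Function.update_of_ne h] using continuous_const

lemma hcs_comp_line {F : (Fin d → ℝ) → ℝ} (hF : HasCompactSupport F)
    (x : Fin d → ℝ) (j : Fin d) :
    HasCompactSupport (fun t : ℝ => F (Function.update x j t)) := by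
  set r : (Fin d → ℝ) → ℝ := fun w => w j with hr
  have hrc : Continuous r := continuous_apply _
  have hsub : tsupport (fun t => F (Function.update x j t)) ⊆ r '' tsupport F := by
    have h1 : Function.support (fun t => F (Function.update x j t)) ⊆
        (fun t => Function.update x j t) ⁻¹' tsupport F := fun t ht =>
      subset_tsupport F (by simpa [Function.mem_support] using ht)
    have h2 : (fun t => Function.update x j t) ⁻¹' tsupport F ⊆ r '' tsupport F := by
      intro t ht
      exact ⟨Function.update x j t, ht, by simp [hr]⟩
    refine (closure_minimal h1 ?_).trans h2
    exact (isClosed_tsupport F).preimage (continuous_update_line x j)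
  exact IsCompact.of_isClosed_subset (hF.image hrc) (isClosed_tsupport _) hsub

lemma hasDerivAt_comp_update {f : (Fin d → ℝ) → ℝ} (hf : ContDiff ℝ 1 f)
    (x : Fin d → ℝ) (j : Fin d) (t : ℝ) :
    HasDerivAt (fun t : ℝ => f (Function.update x j t))
      (pd j f (Function.update x j t)) t := by
  have h1 : HasFDerivAt f (fderiv ℝ f (Function.update x j t)) (Function.update x j t) :=
    (hf.differentiable one_ne_zero _).hasFDerivAt
  exact h1.comp_hasDerivAt t (hasDerivAt_update x j t)

/-- one-dimensional integration by parts on `[a, ∞)` along coordinate `j`. -/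
lemma ibp_line {g ψ : (Fin d → ℝ) → ℝ} (hg : ContDiff ℝ 1 g) (hψ : ContDiff ℝ 1 ψ)
    (hgc : HasCompactSupport g) (j : Fin d) (x : Fin d → ℝ) :
    ∫ t in Set.Ici (x j), pd j g (Function.update x j t) * ψ (Function.update x j t)
      = -(g x * ψ x)
        - ∫ t in Set.Ici (x j), g (Function.update x j t) * pd j ψ (Function.update x j t) := by
  set a := x j
  set u : ℝ → ℝ := fun t => g (Function.update x j t) with hu_def
  set v : ℝ → ℝ := fun t => ψ (Function.update x j t) with hv_def
  set u' : ℝ → ℝ := fun t => pd j g (Function.update x j t) with hu'_def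
  set v' : ℝ → ℝ := fun t => pd j ψ (Function.update x j t) with hv'_def
  have hu : ∀ t ∈ Set.Ioi a, HasDerivAt u (u' t) t := fun t _ => hasDerivAt_comp_update hg x j t
  have hv : ∀ t ∈ Set.Ioi a, HasDerivAt v (v' t) t := fun t _ => hasDerivAt_comp_update hψ x j t
  have hucont : Continuous u := (hg.continuous).comp (continuous_update_line x j)
  have hvcont : Continuous v := (hψ.continuous).comp (continuous_update_line x j)
  have hu'cont : Continuous u' := (pd_continuous j hg).comp (continuous_update_line x j)
  have hv'cont : Continuous v' := (pd_continuous j hψ).comp (continuous_update_line x j)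
  have hucs : HasCompactSupport u := hcs_comp_line hgc x j
  have hu'cs : HasCompactSupport u' := hcs_comp_line (pd_hcs j hgc) x j
  have huv' : IntegrableOn (u * v') (Set.Ioi a) := by
    refine ((hucont.mul hv'cont).integrable_of_hasCompactSupport
      (hucs.mul_right)).integrableOn
  have hu'v : IntegrableOn (u' * v) (Set.Ioi a) := by
    refine ((hu'cont.mul hvcont).integrable_of_hasCompactSupport
      (hu'cs.mul_right)).integrableOn
  have h_zero : Tendsto (u * v) (𝓝[>] a) (𝓝 (u a * v a)) :=
    ((hucont.mul hvcont).continuousAt).continuousWithinAt.tendsto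
  have h_infty : Tendsto (u * v) atTop (𝓝 0) := by
    have : Tendsto (u * v) (cocompact ℝ) (𝓝 0) :=
      (hucs.mul_right).is_zero_at_infty
    exact this.mono_left (by rw [cocompact_eq_atBot_atTop]; exact le_sup_right)
  have key := integral_Ioi_mul_deriv_eq_deriv_mul hu hv huv' hu'v h_zero h_infty
  have hxa : Function.update x j a = x := Function.update_eq_self j x
  have hua : u a = g x := by rw [hu_def]; simp [hxa]
  have hva : v a = ψ x := by rw [hv_def]; simp [hxa]
  rw [MeasureTheory.integral_Ici_eq_integral_Ioi, MeasureTheory.integral_Ici_eq_integral_Ioi]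
  have key2 : ∫ t in Set.Ioi a, u t * v' t = 0 - u a * v a - ∫ t in Set.Ioi a, u' t * v t := key
  show ∫ t in Set.Ioi a, u' t * v t = -(g x * ψ x) - ∫ t in Set.Ioi a, u t * v' t
  rw [hua, hva] at key2
  linarith

def SOct (I : Finset (Fin d)) (y : Fin d → ℝ) : Set ({i // i ∈ I} → ℝ) :=
  {z | ∀ i, y i.1 ≤ z i}

lemma SOct_eq_pi (I : Finset (Fin d)) (y : Fin d → ℝ) :
    SOct I y = Set.univ.pi fun i => Set.Ici (y i.1) := by
  exact Set.ext fun z => ⟨fun h i _ => h i, fun h i => h i (Set.mem_univ i)⟩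

lemma measurableSet_SOct {I : Finset (Fin d)} {y : Fin d → ℝ} : MeasurableSet (SOct I y) := by
  rw [SOct_eq_pi]; exact MeasurableSet.univ_pi fun i => measurableSet_Ici

variable {I : Finset (Fin d)} {j : Fin d}

/-- the coordinates of `insert j I` other than `j` are those of `I`. -/
def restEquiv (hj : j ∉ I) : {i // i ∈ I} ≃ {x : {i // i ∈ insert j I} // ¬ x.1 = j} where
  toFun i := ⟨⟨i.1, Finset.mem_insert_of_mem i.2⟩, fun h => hj (h ▸ i.2)⟩
  invFun x := ⟨x.1.1, by
    rcases Finset.mem_insert.mp x.1.2 with h | h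
    · exact absurd h x.2
    · exact h⟩
  left_inv i := rfl
  right_inv x := rfl

def jUnique : Unique {x : {i // i ∈ insert j I} // x.1 = j} :=
  { default := ⟨⟨j, Finset.mem_insert_self j I⟩, rfl⟩
    uniq := fun x => Subtype.ext (Subtype.ext x.2) }

attribute [local instance] jUnique

/-- the measurable equivalence peeling off coordinate `j` from `insert j I`. -/
noncomputable def peelE (hj : j ∉ I) :
    (ℝ × ({i // i ∈ I} → ℝ)) ≃ᵐ ({i // i ∈ insert j I} → ℝ) :=
  (MeasurableEquiv.prodCongr
      (MeasurableEquiv.funUnique {x : {i // i ∈ insert j I} // x.1 = j} ℝ).symm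
      (MeasurableEquiv.piCongrLeft (fun _ => ℝ) (restEquiv hj))).trans
    (MeasurableEquiv.piEquivPiSubtypeProd (fun _ : {i // i ∈ insert j I} => ℝ)
      (fun x : {i // i ∈ insert j I} => x.1 = j)).symm

lemma peelE_mp (hj : j ∉ I) : MeasurePreserving (peelE hj) volume volume := by
  have ha : MeasurePreserving
      (⇑(MeasurableEquiv.funUnique {x : {i // i ∈ insert j I} // x.1 = j} ℝ).symm)
      volume volume := by
    have h := (volume_preserving_funUnique {x : {i // i ∈ insert j I} // x.1 = j} ℝ).symm _
    convert h using 2 <;> congr 1 <;> exact Subsingleton.elim _ _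
  have hb : MeasurePreserving
      (⇑(MeasurableEquiv.piCongrLeft (fun _ : {x : {i // i ∈ insert j I} // ¬ x.1 = j} => ℝ)
        (restEquiv hj))) volume volume :=
    volume_measurePreserving_piCongrLeft _ _
  have h1 : MeasurePreserving
      (⇑(MeasurableEquiv.prodCongr
        (MeasurableEquiv.funUnique {x : {i // i ∈ insert j I} // x.1 = j} ℝ).symm
        (MeasurableEquiv.piCongrLeft (fun _ => ℝ) (restEquiv hj))))
      volume volume := ha.prod hb
  have h2 : MeasurePreserving
      (⇑(MeasurableEquiv.piEquivPiSubtypeProd (fun _ : {i // i ∈ insert j I} => ℝ)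
        (fun x : {i // i ∈ insert j I} => x.1 = j)).symm) volume volume := by
    have h := (volume_preserving_piEquivPiSubtypeProd
      (fun _ : {i // i ∈ insert j I} => ℝ)
      (fun x : {i // i ∈ insert j I} => x.1 = j)).symm _
    convert h using 2 <;> congr 1 <;> exact Subsingleton.elim _ _
  have hco : ⇑(peelE hj)
      = (⇑(MeasurableEquiv.piEquivPiSubtypeProd (fun _ : {i // i ∈ insert j I} => ℝ)
          (fun x : {i // i ∈ insert j I} => x.1 = j)).symm)
        ∘ (⇑(MeasurableEquiv.prodCongr
          (MeasurableEquiv.funUnique {x : {i // i ∈ insert j I} // x.1 = j} ℝ).symm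
          (MeasurableEquiv.piCongrLeft (fun _ => ℝ) (restEquiv hj)))) := rfl
  rw [hco]
  exact h2.comp h1

lemma peelE_apply (hj : j ∉ I) (t : ℝ) (z : {i // i ∈ I} → ℝ)
    (i : {i' // i' ∈ insert j I}) :
    peelE hj (t, z) i = if h : i.1 ∈ I then z ⟨i.1, h⟩ else t := by
  obtain ⟨i, hi⟩ := i
  have unfold1 : peelE hj (t, z)
      = (Equiv.piEquivPiSubtypeProd (fun x : {i' // i' ∈ insert j I} => x.1 = j)
          (fun _ => ℝ)).symm
        ((MeasurableEquiv.funUnique {x : {i' // i' ∈ insert j I} // x.1 = j} ℝ).symm t,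
         (MeasurableEquiv.piCongrLeft (fun _ => ℝ) (restEquiv hj)) z) := by rfl
  have step : peelE hj (t, z) ⟨i, hi⟩ =
      if h : (⟨i, hi⟩ : {i' // i' ∈ insert j I}).1 = j
      then ((MeasurableEquiv.funUnique {x : {i' // i' ∈ insert j I} // x.1 = j} ℝ).symm t)
            ⟨⟨i, hi⟩, h⟩
      else ((MeasurableEquiv.piCongrLeft (fun _ => ℝ) (restEquiv hj)) z) ⟨⟨i, hi⟩, h⟩ := by
    rw [unfold1, Equiv.piEquivPiSubtypeProd_symm_apply]
  rw [step]
  by_cases h : i ∈ I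
  · have hne : ¬ i = j := fun h' => hj (h' ▸ h)
    rw [dif_neg hne, dif_pos h]
    have : (⟨⟨i, hi⟩, hne⟩ : {x : {i' // i' ∈ insert j I} // ¬ x.1 = j})
        = restEquiv hj ⟨i, h⟩ := rfl
    rw [this, MeasurableEquiv.coe_piCongrLeft, Equiv.piCongrLeft_apply_apply]
  · have heq : i = j := by
      rcases Finset.mem_insert.mp hi with h' | h'
      · exact h'
      · exact absurd h' h
    rw [dif_pos heq, dif_neg h]
    rfl

lemma combine_peelE (hj : j ∉ I) (y : Fin d → ℝ) (t : ℝ) (z : {i // i ∈ I} → ℝ) :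
    combine y (insert j I) (peelE hj (t, z)) = combine (Function.update y j t) I z := by
  funext i
  by_cases h : i ∈ I
  · have hi : i ∈ insert j I := Finset.mem_insert_of_mem h
    rw [show combine y (insert j I) (peelE hj (t, z)) i = peelE hj (t, z) ⟨i, hi⟩ from
      combine_restrict y (insert j I) _ ⟨i, hi⟩, peelE_apply hj t z ⟨i, hi⟩]
    simp [combine, h]
  · rcases eq_or_ne i j with rfl | hne
    · have hi : i ∈ insert i I := Finset.mem_insert_self i I
      rw [show combine y (insert i I) (peelE hj (t, z)) i = peelE hj (t, z) ⟨i, hi⟩ from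
        combine_restrict y (insert i I) _ ⟨i, hi⟩, peelE_apply hj t z ⟨i, hi⟩]
      simp [combine, h]
    · have hi : i ∉ insert j I := by
        simp [Finset.mem_insert, h, hne]
      rw [combine_not_mem _ _ _ hi, combine_not_mem _ _ _ h, Function.update_of_ne hne]

lemma peelE_preimage (hj : j ∉ I) (y : Fin d → ℝ) :
    (⇑(peelE hj)) ⁻¹' (SOct (insert j I) y) = Set.Ici (y j) ×ˢ SOct I y := by
  ext ⟨t, z⟩
  constructor
  · intro hp
    constructor
    · have := hp ⟨j, Finset.mem_insert_self j I⟩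
      rwa [peelE_apply hj t z, dif_neg hj] at this
    · intro i
      have := hp ⟨i.1, Finset.mem_insert_of_mem i.2⟩
      rwa [peelE_apply hj t z, dif_pos i.2] at this
  · rintro ⟨ht, hz⟩ i
    rw [peelE_apply hj t z]
    by_cases h : i.1 ∈ I
    · rw [dif_pos h]; exact hz ⟨i.1, h⟩
    · rw [dif_neg h]
      have heq : i.1 = j := by
        rcases Finset.mem_insert.mp i.2 with h' | h'
        · exact h'
        · exact absurd h' h
      rw [heq]; exact ht

/-- global integrability of a compactly-supported continuous function through the peel. -/
lemma integrable_comp_peel (hj : j ∉ I) {F : (Fin d → ℝ) → ℝ} (hFc : Continuous F)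
    (hFs : HasCompactSupport F) (y : Fin d → ℝ) :
    Integrable (fun p : ℝ × ({i // i ∈ I} → ℝ) =>
      F (combine (Function.update y j p.1) I p.2)) volume := by
  have hbase : Integrable (fun w : {i // i ∈ insert j I} → ℝ => F (combine y (insert j I) w))
      volume :=
    (hFc.comp (continuous_combine y (insert j I))).integrable_of_hasCompactSupport
      (hcs_comp_combine hFs y (insert j I))
  have := ((peelE_mp hj).integrable_comp_emb (peelE hj).measurableEmbedding).mpr hbase
  refine this.congr ?_
  filter_upwards with p
  rcases p with ⟨t, z⟩
  rw [Function.comp_apply, combine_peelE hj y t z]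

/-- peel off one coordinate from the octant integral. -/
lemma peel_integral (hj : j ∉ I) (F : (Fin d → ℝ) → ℝ) (hFc : Continuous F)
    (hFs : HasCompactSupport F) (y : Fin d → ℝ) :
    ∫ z in SOct (insert j I) y, F (combine y (insert j I) z)
      = ∫ t in Set.Ici (y j), ∫ z in SOct I y,
          F (combine (Function.update y j t) I z) := by
  have h1 := (peelE_mp hj).setIntegral_preimage_emb (peelE hj).measurableEmbedding
      (fun w => F (combine y (insert j I) w)) (SOct (insert j I) y)
  rw [← h1, peelE_preimage hj y]
  have hint : IntegrableOn (fun p : ℝ × ({i // i ∈ I} → ℝ) =>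
      F (combine y (insert j I) (peelE hj p))) (Set.Ici (y j) ×ˢ SOct I y)
      (volume.prod volume) := by
    refine Integrable.integrableOn ?_
    have := ((peelE_mp hj).integrable_comp_emb (peelE hj).measurableEmbedding).mpr
      ((hFc.comp (continuous_combine y (insert j I))).integrable_of_hasCompactSupport
        (hcs_comp_combine hFs y (insert j I)))
    exact this
  rw [show (volume : Measure (ℝ × ({i // i ∈ I} → ℝ)))
    = (volume : Measure ℝ).prod volume from rfl]
  rw [MeasureTheory.setIntegral_prod _ hint]
  refine setIntegral_congr_fun measurableSet_Ici (fun t _ => ?_)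
  refine setIntegral_congr_fun measurableSet_SOct (fun z _ => ?_)
  rw [combine_peelE hj y t z]

lemma combine_update (hjI : j ∉ I) (y : Fin d → ℝ) (z : {i // i ∈ I} → ℝ) (t : ℝ) :
    combine (Function.update y j t) I z = Function.update (combine y I z) j t := by
  funext i
  by_cases h : i ∈ I
  · have hne : i ≠ j := fun h' => hjI (h' ▸ h)
    rw [Function.update_of_ne hne]
    simp [combine, h]
  · rcases eq_or_ne i j with rfl | hne
    · rw [Function.update_self]
      simp [combine, h]
    · rw [Function.update_of_ne hne]
      simp [combine, h, Function.update_of_ne hne]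

lemma SOct_update {K : Finset (Fin d)} {j : Fin d} (hj : j ∉ K) (y : Fin d → ℝ) (t : ℝ) :
    SOct K (Function.update y j t) = SOct K y := by
  unfold SOct
  ext z
  refine forall_congr' fun i => ?_
  rw [Function.update_of_ne (fun h => hj (by rw [← h]; exact i.2))]

/-- the inner step of the induction: swap, 1-d integration by parts, swap back. -/
lemma step_inner (hjI : j ∉ I)
    (g φ : (Fin d → ℝ) → ℝ) (hg : ContDiff ℝ 1 g)
    (hψ : ContDiff ℝ 1 (mpartial I φ)) (hψ' : Continuous (pd j (mpartial I φ)))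
    (hgc : HasCompactSupport g) (y : Fin d → ℝ) :
    (∫ t in Set.Ici (y j), ∫ z in SOct I y,
        pd j g (combine (Function.update y j t) I z)
          * mpartial I φ (combine (Function.update y j t) I z))
      = -(∫ z in SOct I y, g (combine y I z) * mpartial I φ (combine y I z))
        - ∫ w in SOct (insert j I) y,
            g (combine y (insert j I) w)
              * pd j (mpartial I φ) (combine y (insert j I) w) := by
  set ψ := mpartial I φ with hψdef
  -- integrability through the peel, for the two product integrands
  have hprod : Integrable (fun p : ℝ × ({i // i ∈ I} → ℝ) =>
      pd j g (combine (Function.update y j p.1) I p.2)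
        * ψ (combine (Function.update y j p.1) I p.2)) volume :=
    integrable_comp_peel hjI ((pd_continuous j hg).mul hψ.continuous)
      ((pd_hcs j hgc).mul_right) y
  have hre : Integrable (fun p : ℝ × ({i // i ∈ I} → ℝ) =>
      pd j g (combine (Function.update y j p.1) I p.2)
        * ψ (combine (Function.update y j p.1) I p.2))
      ((volume.restrict (Set.Ici (y j))).prod (volume.restrict (SOct I y))) := by
    rw [Measure.prod_restrict]; exact hprod.restrict
  have hprod' : Integrable (fun p : ℝ × ({i // i ∈ I} → ℝ) =>
      g (combine (Function.update y j p.1) I p.2)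
        * pd j ψ (combine (Function.update y j p.1) I p.2)) volume :=
    integrable_comp_peel hjI (hg.continuous.mul hψ') (hgc.mul_right) y
  have hre' : Integrable (fun p : ℝ × ({i // i ∈ I} → ℝ) =>
      g (combine (Function.update y j p.1) I p.2)
        * pd j ψ (combine (Function.update y j p.1) I p.2))
      ((volume.restrict (Set.Ici (y j))).prod (volume.restrict (SOct I y))) := by
    rw [Measure.prod_restrict]; exact hprod'.restrict
  have hint1 : Integrable (fun z => g (combine y I z) * ψ (combine y I z))
      (volume.restrict (SOct I y)) :=
    (((hg.continuous.mul hψ.continuous).comp (continuous_combine y I)).integrable_of_hasCompactSupport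
      (hcs_comp_combine (hgc.mul_right) y I)).restrict
  have hint2 : Integrable (fun z => ∫ t in Set.Ici (y j),
      g (combine (Function.update y j t) I z) * pd j ψ (combine (Function.update y j t) I z))
      (volume.restrict (SOct I y)) := hre'.integral_prod_right
  have hint1' : Integrable (fun z => -(g (combine y I z) * ψ (combine y I z)))
      (volume.restrict (SOct I y)) := hint1.neg
  calc
    (∫ t in Set.Ici (y j), ∫ z in SOct I y,
        pd j g (combine (Function.update y j t) I z)
          * ψ (combine (Function.update y j t) I z))
      = ∫ z in SOct I y, ∫ t in Set.Ici (y j),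
          pd j g (combine (Function.update y j t) I z)
            * ψ (combine (Function.update y j t) I z) :=
        integral_integral_swap hre
    _ = ∫ z in SOct I y,
          (-(g (combine y I z) * ψ (combine y I z))
            - ∫ t in Set.Ici (y j),
                g (combine (Function.update y j t) I z)
                  * pd j ψ (combine (Function.update y j t) I z)) := by
        refine setIntegral_congr_fun measurableSet_SOct fun z _ => ?_
        have hxj : combine y I z j = y j := combine_not_mem y I z hjI
        have hupd : ∀ t, combine (Function.update y j t) I z
            = Function.update (combine y I z) j t := combine_update hjI y z
        simp only [hupd]
        rw [← hxj]
        exact ibp_line hg hψ hgc j (combine y I z)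
    _ = -(∫ z in SOct I y, g (combine y I z) * ψ (combine y I z))
        - ∫ z in SOct I y, ∫ t in Set.Ici (y j),
            g (combine (Function.update y j t) I z)
              * pd j ψ (combine (Function.update y j t) I z) := by
        rw [integral_sub hint1' hint2, integral_neg]
    _ = -(∫ z in SOct I y, g (combine y I z) * ψ (combine y I z))
        - ∫ w in SOct (insert j I) y,
            g (combine y (insert j I) w) * pd j ψ (combine y (insert j I) w) := by
        congr 1
        rw [← integral_integral_swap hre']
        exact (peel_integral hjI (fun x => g x * pd j ψ x) (hg.continuous.mul hψ')
          (hgc.mul_right) y).symm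

/-- main induction over the finset of coordinates. -/
lemma main_ibp (J : Finset (Fin d)) : ∀ (g φ : (Fin d → ℝ) → ℝ),
    ContDiff ℝ J.card g → ContDiff ℝ J.card φ → HasCompactSupport g → ∀ y : Fin d → ℝ,
    (∫ z in SOct J y, mpartial J g (combine y J z) * φ (combine y J z)) =
      (-1 : ℝ) ^ J.card *
        ∑ I ∈ J.powerset, ∫ z in SOct I y,
          g (combine y I z) * mpartial I φ (combine y I z) := by
  induction J using Finset.induction_on with
  | empty =>
      intro g φ hg hφ hgc y
      rw [Finset.powerset_empty, Finset.sum_singleton, Finset.card_empty, pow_zero, one_mul,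
        mpartial_empty, mpartial_empty]
  | @insert j J hj ih =>
      intro g φ hg hφ hgc y
      have hcard : (insert j J).card = J.card + 1 := Finset.card_insert_of_notMem hj
      have hg1 : ContDiff ℝ ((J.card + 1 : ℕ)) g := by
        rw [hcard] at hg; exact_mod_cast hg
      have hφ1 : ContDiff ℝ ((J.card + 1 : ℕ)) φ := by
        rw [hcard] at hφ; exact_mod_cast hφ
      have hgJ : ContDiff ℝ (J.card : ℕ) (pd j g) := pd_contDiff j hg1
      have hgC1 : ContDiff ℝ 1 g := hg1.of_le
        (by exact_mod_cast Nat.succ_le_succ (Nat.zero_le J.card))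
      have hφJ : ContDiff ℝ (J.card : ℕ) φ :=
        hφ1.of_le (by exact_mod_cast Nat.le_succ J.card)
      have hgcJ : HasCompactSupport (pd j g) := pd_hcs j hgc
      -- continuity of the full integrand
      have hmg : Continuous (mpartial (insert j J) g) := by
        refine mpartial_continuous ?_
        rw [hcard]; exact_mod_cast hg1
      have hFc : Continuous (fun x => mpartial (insert j J) g x * φ x) :=
        hmg.mul hφ1.continuous
      have hFs : HasCompactSupport (fun x => mpartial (insert j J) g x * φ x) :=
        (mpartial_hcs hgc).mul_right
      -- step 1: peel off coordinate j
      have step1 := peel_integral hj (fun x => mpartial (insert j J) g x * φ x) hFc hFs y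
      -- per-subset facts
      have hsub : ∀ I, I ∈ J.powerset → I ⊆ J := fun I hI => Finset.mem_powerset.mp hI
      have hjI : ∀ I, I ∈ J.powerset → j ∉ I := fun I hI h => hj (hsub I hI h)
      have hcardI : ∀ I, I ∈ J.powerset → I.card ≤ J.card :=
        fun I hI => Finset.card_le_card (hsub I hI)
      have hψC : ∀ I ∈ J.powerset, ContDiff ℝ 1 (mpartial I φ) := by
        intro I hI
        refine mpartial_contDiff (n := 1) (hφ1.of_le ?_)
        have h1 : 1 + I.card ≤ J.card + 1 := by have := hcardI I hI; omega
        exact_mod_cast h1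
      have hψ'C : ∀ I ∈ J.powerset, Continuous (pd j (mpartial I φ)) :=
        fun I hI => pd_continuous j (hψC I hI)
      -- integrability of each summand in t
      have hAint : ∀ I ∈ J.powerset, Integrable (fun t => ∫ z in SOct I y,
          pd j g (combine (Function.update y j t) I z)
            * mpartial I φ (combine (Function.update y j t) I z))
          (volume.restrict (Set.Ici (y j))) := by
        intro I hI
        have hprod : Integrable (fun p : ℝ × ({i // i ∈ I} → ℝ) =>
            pd j g (combine (Function.update y j p.1) I p.2)
              * mpartial I φ (combine (Function.update y j p.1) I p.2)) volume :=
          integrable_comp_peel (hjI I hI)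
            ((pd_continuous j hgC1).mul (hψC I hI).continuous)
            ((pd_hcs j hgc).mul_right) y
        have hre : Integrable (fun p : ℝ × ({i // i ∈ I} → ℝ) =>
            pd j g (combine (Function.update y j p.1) I p.2)
              * mpartial I φ (combine (Function.update y j p.1) I p.2))
            ((volume.restrict (Set.Ici (y j))).prod (volume.restrict (SOct I y))) := by
          rw [Measure.prod_restrict]; exact hprod.restrict
        exact hre.integral_prod_left
      calc
        (∫ z in SOct (insert j J) y,
            mpartial (insert j J) g (combine y (insert j J) z) * φ (combine y (insert j J) z))
          = ∫ t in Set.Ici (y j), ∫ z in SOct J y,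
              mpartial (insert j J) g (combine (Function.update y j t) J z)
                * φ (combine (Function.update y j t) J z) := step1
        _ = ∫ t in Set.Ici (y j), ((-1 : ℝ) ^ J.card * ∑ I ∈ J.powerset,
              ∫ z in SOct I y, pd j g (combine (Function.update y j t) I z)
                * mpartial I φ (combine (Function.update y j t) I z)) := by
            refine setIntegral_congr_fun measurableSet_Ici fun t _ => ?_
            have e1 : SOct J (Function.update y j t) = SOct J y := SOct_update hj y t
            rw [mpartial_insert hj (by exact_mod_cast hg1), ← e1,
              ih (pd j g) φ hgJ hφJ hgcJ (Function.update y j t)]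
            congr 1
            refine Finset.sum_congr rfl fun I hI => ?_
            rw [SOct_update (hjI I hI) y t]
        _ = (-1 : ℝ) ^ J.card * ∑ I ∈ J.powerset, ∫ t in Set.Ici (y j),
              ∫ z in SOct I y, pd j g (combine (Function.update y j t) I z)
                * mpartial I φ (combine (Function.update y j t) I z) := by
            rw [integral_const_mul]
            congr 1
            exact integral_finset_sum _ hAint
        _ = (-1 : ℝ) ^ J.card * ∑ I ∈ J.powerset,
              (-(∫ z in SOct I y, g (combine y I z) * mpartial I φ (combine y I z))
                - ∫ w in SOct (insert j I) y,
                    g (combine y (insert j I) w)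
                      * mpartial (insert j I) φ (combine y (insert j I) w)) := by
            congr 1
            refine Finset.sum_congr rfl fun I hI => ?_
            rw [step_inner (hjI I hI) g φ hgC1 (hψC I hI) (hψ'C I hI) hgc y]
            congr 1
            refine setIntegral_congr_fun measurableSet_SOct fun w _ => ?_
            have h2 : I.card + 1 ≤ J.card + 1 := by have := hcardI I hI; omega
            rw [mpartial_insert' (hjI I hI) (hφ1.of_le (by exact_mod_cast h2))]
        _ = (-1 : ℝ) ^ (insert j J).card *
              ∑ I ∈ (insert j J).powerset, ∫ z in SOct I y,
                g (combine y I z) * mpartial I φ (combine y I z) := by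
            rw [hcard, Finset.sum_powerset_insert hj, pow_succ]
            rw [Finset.sum_sub_distrib]
            simp only [Finset.sum_neg_distrib]
            ring

theorem stmt7' {d : ℕ} (g φ : (Fin d → ℝ) → ℝ)
    (hgd : ContDiff ℝ d g) (hφd : ContDiff ℝ d φ) (hgc : HasCompactSupport g)
    (y : Fin d → ℝ) :
    (∫ z in {z : Fin d → ℝ | ∀ i, y i ≤ z i}, mpartial Finset.univ g z * φ z) =
      (-1 : ℝ) ^ d *
        ∑ I ∈ (Finset.univ : Finset (Fin d)).powerset,
          ∫ z in {z : {i // i ∈ I} → ℝ | ∀ i, y i.1 ≤ z i},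
            g (combine y I z) * mpartial I φ (combine y I z) := by
  classical
  have hcd : (Finset.univ : Finset (Fin d)).card = d := by simp
  have hg' : ContDiff ℝ ((Finset.univ : Finset (Fin d)).card : ℕ) g := by rw [hcd]; exact hgd
  have hφ' : ContDiff ℝ ((Finset.univ : Finset (Fin d)).card : ℕ) φ := by rw [hcd]; exact hφd
  have key := main_ibp (Finset.univ : Finset (Fin d)) g φ hg' hφ' hgc y
  rw [hcd] at key
  set e : {i // i ∈ (Finset.univ : Finset (Fin d))} ≃ Fin d :=
    Equiv.subtypeUnivEquiv (fun i => Finset.mem_univ i) with he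
  set E := MeasurableEquiv.piCongrLeft (fun _ : Fin d => ℝ) e with hE
  have hmp : MeasurePreserving (⇑E) volume volume := by
    have h := volume_measurePreserving_piCongrLeft (fun _ : Fin d => ℝ) e
    convert h using 2 <;> congr 1 <;> exact Subsingleton.elim _ _
  have hEx : ∀ x : {i // i ∈ (Finset.univ : Finset (Fin d))} → ℝ,
      E x = combine y Finset.univ x := by
    intro x; funext i
    have h1 : E x (e ⟨i, Finset.mem_univ i⟩) = x ⟨i, Finset.mem_univ i⟩ := by
      rw [hE, MeasurableEquiv.coe_piCongrLeft]
      exact Equiv.piCongrLeft_apply_apply (fun _ => ℝ) e x ⟨i, Finset.mem_univ i⟩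
    have h2 : e ⟨i, Finset.mem_univ i⟩ = i := rfl
    rw [h2] at h1
    rw [h1, combine_restrict y Finset.univ x ⟨i, Finset.mem_univ i⟩]
  have hpre : (⇑E) ⁻¹' {z : Fin d → ℝ | ∀ i, y i ≤ z i} = SOct Finset.univ y := by
    ext x
    simp only [Set.mem_preimage, Set.mem_setOf_eq, hEx x]
    constructor
    · intro h i
      have := h i.1
      rwa [combine_restrict y Finset.univ x i] at this
    · intro h i
      rw [show combine y Finset.univ x i = x ⟨i, Finset.mem_univ i⟩ from
        combine_restrict y Finset.univ x ⟨i, Finset.mem_univ i⟩]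
      exact h ⟨i, Finset.mem_univ i⟩
  have htrans := hmp.setIntegral_preimage_emb E.measurableEmbedding
    (fun z => mpartial Finset.univ g z * φ z) {z : Fin d → ℝ | ∀ i, y i ≤ z i}
  rw [hpre] at htrans
  rw [← htrans]
  calc (∫ x in SOct Finset.univ y, mpartial Finset.univ g (E x) * φ (E x))
      = ∫ x in SOct Finset.univ y,
          mpartial Finset.univ g (combine y Finset.univ x)
            * φ (combine y Finset.univ x) := by
        refine setIntegral_congr_fun measurableSet_SOct fun x _ => ?_
        rw [hEx x]
    _ = (-1 : ℝ) ^ d *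
        ∑ I ∈ (Finset.univ : Finset (Fin d)).powerset,
          ∫ z in {z : {i // i ∈ I} → ℝ | ∀ i, y i.1 ≤ z i},
            g (combine y I z) * mpartial I φ (combine y I z) := key

end AuxIBP

/-- multidimensional integration by parts over the Pareto octant `{z ≥ y}`:
`∫_{z ≥ y} ∂ᵈg/∂z₁⋯∂z_d (z) φ(z) dz
  = (−1)ᵈ Σ_{I ⊆ {1,…,d}} ∫_{z_I ≥ y_I} g(y_{Ī}, z_I) ∂^{|I|}φ/∂z_I (y_{Ī}, z_I) dz_I`,
for `g, φ` `d`-times continuously differentiable with `g` vanishing at infinity together with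
all its derivatives fast enough (here: compactly supported), so the boundary terms at `+∞`
vanish. The `I = ∅` term is `g(y) φ(y)`. -/
theorem stmt7 {d : ℕ} (g φ : (Fin d → ℝ) → ℝ)
    (hgd : ContDiff ℝ d g) (hφd : ContDiff ℝ d φ) (hgc : HasCompactSupport g)
    (y : Fin d → ℝ) :
    (∫ z in {z : Fin d → ℝ | ∀ i, y i ≤ z i}, mpartial Finset.univ g z * φ z) =
      (-1 : ℝ) ^ d *
        ∑ I ∈ (Finset.univ : Finset (Fin d)).powerset,
          ∫ z in {z : {i // i ∈ I} → ℝ | ∀ i, y i.1 ≤ z i},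
            g (combine y I z) * mpartial I φ (combine y I z) :=
  stmt7' g φ hgd hφd hgc y
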